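/- For every r > 1 and every t ≥ 0, ∫₀ᵗ (1+s)^{-r}(1+t-s)^{-r} ds ≤ (2^{r+1}/(r-1)) (1+t)^{-r}. -/
import Mathlib

open MeasureTheory

lemma aux_int_le (r : ℝ) (hr : 1 < r) (t : ℝ) (ht : 0 ≤ t) :
    (∫ s in (0 : ℝ)..t, (1 + s) ^ (-r)) ≤ 1 / (r - 1) := by
  have h1 : (∫ s in (0 : ℝ)..t, (1 + s) ^ (-r)) = ∫ x in (1 : ℝ)..(1 + t), x ^ (-r) := by
    simpa using intervalIntegral.integral_comp_add_left (fun x : ℝ => x ^ (-r)) 1 (a := 0) (b := t)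
  rw [h1, integral_rpow (Or.inr ⟨by linarith, by
      rw [Set.uIcc_of_le (by linarith)]
      rintro ⟨h0, _⟩; linarith⟩)]
  have ha : (0:ℝ) ≤ (1 + t) ^ (-r + 1) := Real.rpow_nonneg (by linarith) _
  have h2 : (1:ℝ) ^ (-r + 1) = 1 := Real.one_rpow _
  rw [h2]
  have heq : ((1 + t) ^ (-r + 1) - 1) / (-r + 1) = (1 - (1 + t) ^ (-r + 1)) / (r - 1) := by
    rw [div_eq_div_iff (by linarith) (by linarith)]; ring
  rw [heq]
  apply div_le_div_of_nonneg_right _ (by linarith)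
  linarith

lemma aux_ptwise (r : ℝ) (hr : 1 < r) (t : ℝ) (s : ℝ) (hs : s ∈ Set.Icc 0 t) :
    (1 + s) ^ (-r) * (1 + t - s) ^ (-r) ≤
      2 ^ r * (1 + t) ^ (-r) * ((1 + s) ^ (-r) + (1 + t - s) ^ (-r)) := by
  obtain ⟨hs0, hst⟩ := hs
  have hps : (0:ℝ) < 1 + s := by linarith
  have hpts : (0:ℝ) < 1 + t - s := by linarith
  have hpt : (0:ℝ) < 1 + t := by linarith
  have hA : (0:ℝ) ≤ (1 + s) ^ (-r) := Real.rpow_nonneg hps.le _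
  have hB : (0:ℝ) ≤ (1 + t - s) ^ (-r) := Real.rpow_nonneg hpts.le _
  have hC : (0:ℝ) ≤ 2 ^ r * (1 + t) ^ (-r) :=
    mul_nonneg (Real.rpow_nonneg (by norm_num) _) (Real.rpow_nonneg hpt.le _)
  have hkey : ((1 + t) / 2) ^ (-r) = 2 ^ r * (1 + t) ^ (-r) := by
    rw [Real.div_rpow hpt.le (by norm_num), div_eq_mul_inv,
      Real.rpow_neg (by norm_num : (0:ℝ) ≤ 2), inv_inv, mul_comm]
  rcases le_total s (t / 2) with h | h
  · have hb : (1 + t) / 2 ≤ 1 + t - s := by linarith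
    have : (1 + t - s) ^ (-r) ≤ 2 ^ r * (1 + t) ^ (-r) := by
      rw [← hkey]
      exact Real.rpow_le_rpow_of_nonpos (by linarith) hb (by linarith)
    nlinarith
  · have hb : (1 + t) / 2 ≤ 1 + s := by linarith
    have : (1 + s) ^ (-r) ≤ 2 ^ r * (1 + t) ^ (-r) := by
      rw [← hkey]
      exact Real.rpow_le_rpow_of_nonpos (by linarith) hb (by linarith)
    nlinarith

/-- Convolution estimate for the power-law kernel `s ↦ (1+s)^{-r}`. -/
theorem convolution_power_law_bound (r : ℝ) (hr : 1 < r) (t : ℝ) (ht : 0 ≤ t) :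
    (∫ s in (0 : ℝ)..t, (1 + s) ^ (-r) * (1 + t - s) ^ (-r)) ≤
      (2 ^ (r + 1) / (r - 1)) * (1 + t) ^ (-r) := by
  have huIcc : Set.uIcc (0:ℝ) t = Set.Icc 0 t := Set.uIcc_of_le ht
  have hc1 : ContinuousOn (fun s : ℝ => (1 + s) ^ (-r)) (Set.uIcc 0 t) := by
    apply ContinuousOn.rpow_const (by fun_prop)
    intro x hx
    rw [huIcc] at hx
    exact Or.inl (by have := hx.1; positivity)
  have hc2 : ContinuousOn (fun s : ℝ => (1 + t - s) ^ (-r)) (Set.uIcc 0 t) := by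
    apply ContinuousOn.rpow_const (by fun_prop)
    intro x hx
    rw [huIcc] at hx
    exact Or.inl (by have := hx.2; intro hcon; nlinarith)
  have hi1 : IntervalIntegrable (fun s : ℝ => (1 + s) ^ (-r)) volume 0 t :=
    hc1.intervalIntegrable
  have hi2 : IntervalIntegrable (fun s : ℝ => (1 + t - s) ^ (-r)) volume 0 t :=
    hc2.intervalIntegrable
  have hiP : IntervalIntegrable (fun s : ℝ => (1 + s) ^ (-r) * (1 + t - s) ^ (-r)) volume 0 t :=
    (hc1.mul hc2).intervalIntegrable
  have hiQ : IntervalIntegrable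
      (fun s : ℝ => 2 ^ r * (1 + t) ^ (-r) * ((1 + s) ^ (-r) + (1 + t - s) ^ (-r))) volume 0 t :=
    ((hi1.add hi2).const_mul _)
  have hmono := intervalIntegral.integral_mono_on ht hiP hiQ (fun s hs => aux_ptwise r hr t s hs)
  have hrefl : (∫ s in (0:ℝ)..t, (1 + t - s) ^ (-r)) = ∫ s in (0:ℝ)..t, (1 + s) ^ (-r) := by
    have := intervalIntegral.integral_comp_sub_left (a := 0) (b := t)
      (fun x : ℝ => (1 + x) ^ (-r)) t
    simpa [sub_eq_add_neg, add_comm, add_left_comm, add_assoc] using this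
  have hsplit : (∫ s in (0:ℝ)..t, 2 ^ r * (1 + t) ^ (-r) * ((1 + s) ^ (-r) + (1 + t - s) ^ (-r)))
      = 2 ^ r * (1 + t) ^ (-r) * ((∫ s in (0:ℝ)..t, (1 + s) ^ (-r))
        + ∫ s in (0:ℝ)..t, (1 + t - s) ^ (-r)) := by
    rw [intervalIntegral.integral_const_mul, intervalIntegral.integral_add hi1 hi2]
  have hle := aux_int_le r hr t ht
  have hC : (0:ℝ) ≤ 2 ^ r * (1 + t) ^ (-r) :=
    mul_nonneg (Real.rpow_nonneg (by norm_num) _) (Real.rpow_nonneg (by linarith) _)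
  have hfin : 2 ^ r * (1 + t) ^ (-r) * ((∫ s in (0:ℝ)..t, (1 + s) ^ (-r))
        + ∫ s in (0:ℝ)..t, (1 + t - s) ^ (-r)) ≤ (2 ^ (r + 1) / (r - 1)) * (1 + t) ^ (-r) := by
    rw [hrefl]
    have h2 : (2:ℝ) ^ (r + 1) = 2 ^ r * 2 := by
      rw [Real.rpow_add (by norm_num), Real.rpow_one]
    rw [h2]
    have he : (2:ℝ)/(r-1) = 1/(r-1) + 1/(r-1) := by ring
    have := mul_le_mul_of_nonneg_left (by linarith : (∫ s in (0:ℝ)..t, (1 + s) ^ (-r))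
        + (∫ s in (0:ℝ)..t, (1 + s) ^ (-r)) ≤ 2 / (r - 1)) hC
    calc 2 ^ r * (1 + t) ^ (-r) * ((∫ s in (0:ℝ)..t, (1 + s) ^ (-r))
          + ∫ s in (0:ℝ)..t, (1 + s) ^ (-r)) ≤ 2 ^ r * (1 + t) ^ (-r) * (2 / (r - 1)) := this
      _ = 2 ^ r * 2 / (r - 1) * (1 + t) ^ (-r) := by ring
  calc (∫ s in (0:ℝ)..t, (1 + s) ^ (-r) * (1 + t - s) ^ (-r)) ≤ _ := hmono
    _ = _ := hsplit
    _ ≤ _ := hfin
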